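/- arXiv:1708.08195 — 3 statements merged into one kernel-verified Lean document; each statement's English description precedes it below -/
import Mathlib

section
/- The rational map σ : P^2 ⇢ P^2 given by (X : Y : Z) ↦ (XY : Y((ω - 1)X + ωY) : Z((ω - 1)X + ωY)), where ω is a primitive cube root of unity, is a birational transformation: it has order 3 as a birational map, i.e., σ∘σ∘σ is the identity on a dense open set. -/
open MvPolynomial

/-- The rational map σ : P² ⇢ P², (X:Y:Z) ↦ (XY : Y((ω-1)X+ωY) : Z((ω-1)X+ωY)),
with ω a primitive cube root of unity, satisfies σ∘σ∘σ = id as a birational map: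
the components of the threefold composition equal a common nonzero polynomial
factor times (X, Y, Z). -/
theorem stmt_6 (ω : ℂ) (hω : IsPrimitiveRoot ω 3) :
    let σ : Fin 3 → MvPolynomial (Fin 3) ℂ :=
      ![X 0 * X 1,
        X 1 * ((C ω - 1) * X 0 + C ω * X 1),
        X 2 * ((C ω - 1) * X 0 + C ω * X 1)]
    ∃ g : MvPolynomial (Fin 3) ℂ, g ≠ 0 ∧
      ∀ i : Fin 3, aeval σ (aeval σ (σ i)) = g * X i := by
  intro σ
  have hω0 : ω ≠ 0 := by
    intro h
    have h3 := hω.pow_eq_one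
    rw [h] at h3
    norm_num at h3
  have hc : ω ^ 2 + ω + 1 = 0 := by
    have h3 : ω ^ 3 = 1 := hω.pow_eq_one
    have h1 : ω ≠ 1 := hω.ne_one (by norm_num)
    have hz : (ω - 1) * (ω ^ 2 + ω + 1) = 0 := by linear_combination h3
    rcases mul_eq_zero.1 hz with h | h
    · exact absurd (sub_eq_zero.1 h) h1
    · exact h
  have hC : (C ω : MvPolynomial (Fin 3) ℂ) ^ 2 + C ω + 1 = 0 := by
    have h := congrArg (C : ℂ → MvPolynomial (Fin 3) ℂ) hc
    simpa [C_add, C_pow] using h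
  refine ⟨C ω * X 1 ^ 7 + (C ω * 4 - 1) * (X 0 * X 1 ^ 6)
      + (C ω * 6 - 3) * (X 0 ^ 2 * X 1 ^ 5) + (C ω * 3 - 3) * (X 0 ^ 3 * X 1 ^ 4),
    ?_, ?_⟩
  · intro h
    have he := congrArg (eval (fun j : Fin 3 => if j = 1 then (1 : ℂ) else 0)) h
    simp at he
    exact hω0 he
  · intro i
    fin_cases i <;>
      simp only [Fin.zero_eta, Fin.mk_one, Fin.reduceFinMk, σ, Matrix.cons_val_zero, Matrix.cons_val_one, Matrix.head_cons,
        Matrix.cons_val_two, Matrix.tail_cons, Fin.isValue, map_mul, map_add, map_sub,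
        map_one, aeval_X, aeval_C, algebraMap_eq]
    · linear_combination (((-1:MvPolynomial (Fin 3) ℂ) * C ω + C ω ^ 2) * (X 0 * X 1 ^ 7) + ((1:MvPolynomial (Fin 3) ℂ) + (-5:MvPolynomial (Fin 3) ℂ) * C ω + (3:MvPolynomial (Fin 3) ℂ) * C ω ^ 2) * (X 0 ^ 2 * X 1 ^ 6) + ((3:MvPolynomial (Fin 3) ℂ) + (-7:MvPolynomial (Fin 3) ℂ) * C ω + (3:MvPolynomial (Fin 3) ℂ) * C ω ^ 2) * (X 0 ^ 3 * X 1 ^ 5) + ((2:MvPolynomial (Fin 3) ℂ) + (-3:MvPolynomial (Fin 3) ℂ) * C ω + C ω ^ 2) * (X 0 ^ 4 * X 1 ^ 4)) * hC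
    · linear_combination (((-1:MvPolynomial (Fin 3) ℂ) * C ω + C ω ^ 2 + (-1:MvPolynomial (Fin 3) ℂ) * C ω ^ 4 + C ω ^ 5) * (X 1 ^ 8) + ((1:MvPolynomial (Fin 3) ℂ) + (-5:MvPolynomial (Fin 3) ℂ) * C ω + (4:MvPolynomial (Fin 3) ℂ) * C ω ^ 2 + C ω ^ 3 + (-6:MvPolynomial (Fin 3) ℂ) * C ω ^ 4 + (4:MvPolynomial (Fin 3) ℂ) * C ω ^ 5) * (X 0 * X 1 ^ 7) + ((3:MvPolynomial (Fin 3) ℂ) + (-9:MvPolynomial (Fin 3) ℂ) * C ω + (7:MvPolynomial (Fin 3) ℂ) * C ω ^ 2 + (4:MvPolynomial (Fin 3) ℂ) * C ω ^ 3 + (-12:MvPolynomial (Fin 3) ℂ) * C ω ^ 4 + (6:MvPolynomial (Fin 3) ℂ) * C ω ^ 5) * (X 0 ^ 2 * X 1 ^ 6) + ((3:MvPolynomial (Fin 3) ℂ) + (-8:MvPolynomial (Fin 3) ℂ) * C ω + (6:MvPolynomial (Fin 3) ℂ) * C ω ^ 2 + (5:MvPolynomial (Fin 3) ℂ) * C ω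 ^ 3 + (-10:MvPolynomial (Fin 3) ℂ) * C ω ^ 4 + (4:MvPolynomial (Fin 3) ℂ) * C ω ^ 5) * (X 0 ^ 3 * X 1 ^ 5) + ((1:MvPolynomial (Fin 3) ℂ) + (-3:MvPolynomial (Fin 3) ℂ) * C ω + (2:MvPolynomial (Fin 3) ℂ) * C ω ^ 2 + (2:MvPolynomial (Fin 3) ℂ) * C ω ^ 3 + (-3:MvPolynomial (Fin 3) ℂ) * C ω ^ 4 + C ω ^ 5) * (X 0 ^ 4 * X 1 ^ 4)) * hC
    · linear_combination (((-1:MvPolynomial (Fin 3) ℂ) * C ω + C ω ^ 2 + (-1:MvPolynomial (Fin 3) ℂ) * C ω ^ 4 + C ω ^ 5) * (X 1 ^ 7 * X 2) + ((1:MvPolynomial (Fin 3) ℂ) + (-5:MvPolynomial (Fin 3) ℂ) * C ω + (4:MvPolynomial (Fin 3) ℂ) * C ω ^ 2 + C ω ^ 3 + (-6:MvPolynomial (Fin 3) ℂ) * C ω ^ 4 + (4:MvPolynomial (Fin 3) ℂ) * C ω ^ 5) * (X 0 * X 1 ^ 6 * X 2) + ((3:MvPolynomial (Fin 3) ℂ)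 + (-9:MvPolynomial (Fin 3) ℂ) * C ω + (7:MvPolynomial (Fin 3) ℂ) * C ω ^ 2 + (4:MvPolynomial (Fin 3) ℂ) * C ω ^ 3 + (-12:MvPolynomial (Fin 3) ℂ) * C ω ^ 4 + (6:MvPolynomial (Fin 3) ℂ) * C ω ^ 5) * (X 0 ^ 2 * X 1 ^ 5 * X 2) + ((3:MvPolynomial (Fin 3) ℂ) + (-8:MvPolynomial (Fin 3) ℂ) * C ω + (6:MvPolynomial (Fin 3) ℂ) * C ω ^ 2 + (5:MvPolynomial (Fin 3) ℂ) * C ω ^ 3 + (-10:MvPolynomial (Fin 3) ℂ) * C ω ^ 4 + (4:MvPolynomial (Fin 3) ℂ) * C ω ^ 5) * (X 0 ^ 3 * X 1 ^ 4 * X 2) + ((1:MvPolynomial (Fin 3) ℂ) + (-3:MvPolynomial (Fin 3) ℂ) * C ω + (2:MvPolynomial (Fin 3) ℂ) * C ω ^ 2 + (2:MvPolynomial (Fin 3) ℂ) * C ω ^ 3 + (-3:MvPolynomial (Fin 3) ℂ) * C ω ^ 4 + C ω ^ 5) * (X 0 ^ 4 * X 1 ^ 3 * X 2)) * hC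
end

section
/- Let ω be a primitive cube root of unity. The birational transformation (X : Y : Z) ↦ (XY : Y((ω - 1)X + ωY) : Z((ω - 1)X + ωY)) of P^2 is conjugate, via the Cremona transformation (X : Y : Z) ↦ (-XY : Y(X + Z) : Z(X + Z)), to the linear transformation (X : Y : Z) ↦ (ω² X : Y : Z); i.e., the composition P⁻¹ ∘ σ ∘ P agrees with the linear map on a dense open set. -/
open MvPolynomial

lemma fin_mk_two_aux {n : ℕ} (h : 2 < n + 3) : (⟨2, h⟩ : Fin (n + 3)) = 2 := rfl

/-- With ω a primitive cube root of unity, the birational transformation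
σ : (X:Y:Z) ↦ (XY : Y((ω-1)X+ωY) : Z((ω-1)X+ωY)) is conjugate, via the
Cremona transformation P : (X:Y:Z) ↦ (-XY : Y(X+Z) : Z(X+Z)), to the linear
map (X:Y:Z) ↦ (ω²X : Y : Z): there is a rational inverse Pinv of P
(Pinv ∘ P = id up to a common nonzero factor) such that Pinv ∘ σ ∘ P equals
the linear map up to a common nonzero polynomial factor. -/
theorem stmt_8 (ω : ℂ) (hω : IsPrimitiveRoot ω 3) :
    let σ : Fin 3 → MvPolynomial (Fin 3) ℂ :=
      ![X 0 * X 1,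
        X 1 * ((C ω - 1) * X 0 + C ω * X 1),
        X 2 * ((C ω - 1) * X 0 + C ω * X 1)]
    let P : Fin 3 → MvPolynomial (Fin 3) ℂ :=
      ![-(X 0 * X 1), X 1 * (X 0 + X 2), X 2 * (X 0 + X 2)]
    let L : Fin 3 → MvPolynomial (Fin 3) ℂ := ![C (ω ^ 2) * X 0, X 1, X 2]
    ∃ Pinv : Fin 3 → MvPolynomial (Fin 3) ℂ,
      (∃ g : MvPolynomial (Fin 3) ℂ, g ≠ 0 ∧ ∀ i, aeval P (Pinv i) = g * X i) ∧
      (∃ h : MvPolynomial (Fin 3) ℂ, h ≠ 0 ∧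
        ∀ i, aeval P (aeval σ (Pinv i)) = h * L i) := by
  intro σ P L
  have hω0 : ω ≠ 0 := hω.ne_zero (by norm_num)
  have hω3 : ω ^ 3 = 1 := hω.pow_eq_one
  have hC : (C ω : MvPolynomial (Fin 3) ℂ) ^ 3 = 1 := by
    rw [← C_pow, hω3, C_1]
  refine ⟨![-(X 0 * X 2), X 1 * (X 0 + X 1), X 2 * (X 0 + X 1)],
    ⟨X 1 * X 2 * (X 0 + X 2), ?_, ?_⟩,
    ⟨C ω * (X 1 ^ 3 * X 2 * (X 0 + X 2) ^ 2 * (X 0 + C ω * X 2)), ?_, ?_⟩⟩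
  · intro hc
    have := congrArg (eval ![0, 1, 1]) hc
    simp at this
  · intro i
    fin_cases i <;>
      simp only [σ, P, L, map_mul, map_add, map_neg, map_sub, map_one, map_pow,
        aeval_X, aeval_C, algebraMap_eq, Fin.mk_zero, Fin.mk_one, fin_mk_two_aux, Matrix.cons_val_zero, Matrix.cons_val_one,
        Matrix.head_cons, Matrix.cons_val_two, Matrix.tail_cons, Fin.isValue] <;>
      ring
  · intro hc
    have := congrArg (eval ![0, 1, 1]) hc
    simp [hω0] at this
  · intro i
    fin_cases i <;>
      simp only [σ, P, L, map_mul, map_add, map_neg, map_sub, map_one, map_pow,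
        aeval_X, aeval_C, algebraMap_eq, Fin.mk_zero, Fin.mk_one, fin_mk_two_aux, Matrix.cons_val_zero, Matrix.cons_val_one,
        Matrix.head_cons, Matrix.cons_val_two, Matrix.tail_cons, Fin.isValue]
    · linear_combination (-(X 0 * X 1 ^ 3 * X 2 * (X 0 + X 2) ^ 2 * (X 0 + C ω * X 2))) * hC
    · ring
    · ring
end

section
/- Let ω be a primitive cube root of unity and let x, y satisfy (1 + y/x)^3 = y with x ≠ 0. Define x' = yx/((ω - 1)x + ωy) (assuming the denominator is nonzero). Then (1 + y/x')^3 = y; i.e., the substitution x ↦ yx/((ω-1)x + ωy) preserves the relation (x + y)^3 = x^3 y. -/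
/-- In a field of characteristic 0 with ω a primitive cube root of unity
(ω² + ω + 1 = 0), if x ≠ 0, (ω-1)x + ωy ≠ 0 and (1 + y/x)³ = y, then
x' = yx/((ω-1)x + ωy) again satisfies (1 + y/x')³ = y; equivalently the
substitution preserves the relation (x+y)³ = x³y. -/
theorem stmt_12 (K : Type*) [Field K] [CharZero K] (ω x y : K)
    (hω : ω ^ 2 + ω + 1 = 0) (hx : x ≠ 0)
    (hd : (ω - 1) * x + ω * y ≠ 0)
    (h : (1 + y / x) ^ 3 = y) :
    (1 + y / (y * x / ((ω - 1) * x + ω * y))) ^ 3 = y ∧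
    (y * x / ((ω - 1) * x + ω * y) + y) ^ 3
      = (y * x / ((ω - 1) * x + ω * y)) ^ 3 * y := by
  have hy : y ≠ 0 := by
    rintro rfl
    simp at h
  have hx' : y * x / ((ω - 1) * x + ω * y) ≠ 0 :=
    div_ne_zero (mul_ne_zero hy hx) hd
  field_simp at h
  have h1 : (1 + y / (y * x / ((ω - 1) * x + ω * y))) ^ 3 = y := by
    field_simp
    ring_nf
    linear_combination (x + y) ^ 3 * (ω - 1) * hω + h
  refine ⟨h1, ?_⟩
  have : (y * x / ((ω - 1) * x + ω * y) + y) ^ 3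
      = (y * x / ((ω - 1) * x + ω * y)) ^ 3
        * (1 + y / (y * x / ((ω - 1) * x + ω * y))) ^ 3 := by
    rw [← mul_pow, mul_add, mul_one, mul_div_cancel₀ y hx']
  rw [this, h1]
end
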